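/- arXiv:1907.04845 — 3 statements merged into one kernel-verified Lean document; each statement's English description precedes it below -/
import Mathlib

section
/- For every integer k ≥ 2 and every positive integer N, one has Z̃_k(N) = Σ_{c∈ℕ, N∣c} z_k(c). -/
open scoped Classical BigOperators Topology
open Filter Asymptotics

/-- Real Riemann zeta: `ζ(s) = ∑ 1/n^s` (valid representation for `s > 1`). -/
noncomputable def zetaR (s : ℝ) : ℝ := ∑' n : ℕ, 1 / (n : ℝ) ^ s

/-- `q` is `k`-free: no prime `p` with `p^k ∣ q`. -/
def KFree (k q : ℕ) : Prop := ∀ p : ℕ, p.Prime → ¬ p ^ k ∣ q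

/-- Indicator (real valued) of `k`-free integers. -/
noncomputable def muk (k q : ℕ) : ℝ := if KFree k q then 1 else 0

/-- `∏_{p ∣ q} (p^k - 1)^{-2}`. -/
noncomputable def Pk (k q : ℕ) : ℝ :=
  ∏ p ∈ q.primeFactors, (((p : ℝ) ^ k - 1) ^ 2)⁻¹

/-- The diffraction intensity `Z_k(ε)` of the `k`-free integers
(Baake–Moody–Pleasants formula). -/
noncomputable def Zk (k : ℕ) (ε : ℝ) : ℝ :=
  ∑' q : ℕ, muk (k + 1) q *
    ((((Finset.Icc 1 ⌊(q : ℝ) * ε⌋₊).filter fun m => Nat.gcd m q = 1)).card : ℝ) * Pk k q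

/-- The discretised quantity `Z̃_k(N)`. -/
noncomputable def Ztilde (k N : ℕ) : ℝ :=
  ∑' q : ℕ, muk (k + 1) q * Pk k q *
    ((((Finset.Icc 1 (q / N)).filter fun m => Nat.gcd m q = 1)).card : ℝ)

/-- The quantity `z_k(c)`. -/
noncomputable def zk (k c : ℕ) : ℝ :=
  ∑' r : ℕ, ∑' d : ℕ,
    (if c ≤ r then (1 : ℝ) else 0) * (ArithmeticFunction.moebius d : ℝ) *
      muk (k + 1) (d * r) * Pk k (d * r)

/-- `ξ_k := ∏_p (1 - (p^k-1)^{-2})`. -/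
noncomputable def xi (k : ℕ) : ℝ :=
  ∏' p : Nat.Primes, (1 - ((((p : ℕ) : ℝ) ^ k - 1) ^ 2)⁻¹)

/-- `γ_k := ζ(2)⁻¹ ∏_p (1 + 2/((p+1)(p^k-2)))`. -/
noncomputable def gam (k : ℕ) : ℝ :=
  (zetaR 2)⁻¹ * ∏' p : Nat.Primes, (1 + 2 / ((((p : ℕ) : ℝ) + 1) * (((p : ℕ) : ℝ) ^ k - 2)))

/-- The leading constant `c_k`. -/
noncomputable def ck (k : ℕ) : ℝ :=
  (2 * (k : ℝ) / (2 * (k : ℝ) - 1)) * (zetaR (2 - 1 / (k : ℝ)) / zetaR 2) * (zetaR (k : ℝ)) ^ 2 *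
    ∏' p : Nat.Primes, (1 - 2 * ((p : ℕ) : ℝ) / ((((p : ℕ) : ℝ) + 1) * ((p : ℕ) : ℝ) ^ k))

section Basics
variable {k K : ℕ}

lemma KFree.of_dvd {a b : ℕ} (h : a ∣ b) (hb : KFree K b) : KFree K a :=
  fun p hp hd => hb p hp (hd.trans h)

lemma not_kfree_zero (hK : 1 ≤ K) : ¬ KFree K 0 :=
  fun h => h 2 Nat.prime_two (dvd_zero _)

lemma kfree_one (hK : 1 ≤ K) : KFree K 1 := by
  intro p hp hd
  have h1 : p ^ K = 1 := Nat.dvd_one.mp hd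
  exact hp.ne_one ((Nat.pow_eq_one.mp h1).resolve_right (by omega : K ≠ 0))

lemma muk_zero (hK : 1 ≤ K) : muk K 0 = 0 := if_neg (not_kfree_zero hK)
lemma muk_one (hK : 1 ≤ K) : muk K 1 = 1 := if_pos (kfree_one hK)
lemma muk_nonneg (K q : ℕ) : 0 ≤ muk K q := by unfold muk; positivity
lemma muk_le_one (K q : ℕ) : muk K q ≤ 1 := by unfold muk; split <;> norm_num

lemma one_le_pow_sub_one {p : ℕ} (hk : 1 ≤ k) (hp : p.Prime) :
    (1 : ℝ) ≤ (p : ℝ) ^ k - 1 := by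
  have h2 : (2 : ℝ) ≤ (p : ℝ) := by exact_mod_cast hp.two_le
  have : (2 : ℝ) ≤ (p : ℝ) ^ k :=
    le_trans h2 (le_self_pow₀ (by linarith) (by omega))
  linarith

lemma Pk_nonneg (k q : ℕ) : 0 ≤ Pk k q := by
  unfold Pk; positivity

lemma Pk_le_one (hk : 1 ≤ k) (q : ℕ) : Pk k q ≤ 1 := by
  unfold Pk
  apply Finset.prod_le_one
  · intro p hp; positivity
  · intro p hp
    have h1 := one_le_pow_sub_one hk (Nat.prime_of_mem_primeFactors hp)
    rw [inv_le_one_iff₀]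
    right
    nlinarith

lemma Pk_one (k : ℕ) : Pk k 1 = 1 := by simp [Pk]
lemma Pk_zero (k : ℕ) : Pk k 0 = 1 := by simp [Pk]

lemma Pk_pos (hk : 1 ≤ k) (q : ℕ) : 0 < Pk k q := by
  unfold Pk
  apply Finset.prod_pos
  intro p hp
  have h1 := one_le_pow_sub_one hk (Nat.prime_of_mem_primeFactors hp)
  positivity

lemma kfree_mul_iff {m n : ℕ} (h : Nat.Coprime m n) :
    KFree K (m * n) ↔ KFree K m ∧ KFree K n := by
  constructor
  · exact fun H => ⟨H.of_dvd (dvd_mul_right _ _), H.of_dvd (dvd_mul_left _ _)⟩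
  · rintro ⟨Hm, Hn⟩ p hp hd
    by_cases hpm : p ∣ m
    · have hpn : ¬ p ∣ n := by
        intro hdvd
        have hg : p ∣ Nat.gcd m n := Nat.dvd_gcd hpm hdvd
        rw [Nat.Coprime] at h
        rw [h] at hg
        exact hp.ne_one (Nat.dvd_one.mp hg)
      have hcop : Nat.Coprime (p ^ K) n := ((hp.coprime_iff_not_dvd).mpr hpn).pow_left K
      exact Hm p hp (hcop.dvd_of_dvd_mul_right hd)
    · have hcop : Nat.Coprime (p ^ K) m := ((hp.coprime_iff_not_dvd).mpr hpm).pow_left K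
      exact Hn p hp (hcop.dvd_of_dvd_mul_left hd)

lemma muk_mul {m n : ℕ} (h : Nat.Coprime m n) :
    muk K (m * n) = muk K m * muk K n := by
  unfold muk
  by_cases hm : KFree K m <;> by_cases hn : KFree K n <;>
    simp [kfree_mul_iff h, hm, hn]

lemma Pk_mul {m n : ℕ} (hm : m ≠ 0) (hn : n ≠ 0) (h : Nat.Coprime m n) :
    Pk k (m * n) = Pk k m * Pk k n := by
  unfold Pk
  rw [Nat.primeFactors_mul hm hn, Finset.prod_union h.disjoint_primeFactors]

end Basics

section G
variable {k : ℕ}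

noncomputable def gk (k q : ℕ) : ℝ :=
  muk (k + 1) q * Pk k q * ((q.divisors.card : ℝ) * q)

lemma gk_nonneg (k q : ℕ) : 0 ≤ gk k q := by
  unfold gk
  have := muk_nonneg (k+1) q
  have := Pk_nonneg k q
  positivity

lemma gk_zero (k : ℕ) : gk k 0 = 0 := by simp [gk]

lemma gk_one (k : ℕ) : gk k 1 = 1 := by
  simp [gk, muk_one (by omega : 1 ≤ k + 1), Pk_one, Nat.divisors_one]

lemma gk_mul (hk : 1 ≤ k) {m n : ℕ} (h : Nat.Coprime m n) :
    gk k (m * n) = gk k m * gk k n := by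
  rcases eq_or_ne m 0 with rfl | hm
  · have hn1 : n = 1 := Nat.coprime_zero_left n |>.mp h
    subst hn1; simp [gk_zero, gk_one]
  rcases eq_or_ne n 0 with rfl | hn
  · have hm1 : m = 1 := Nat.coprime_zero_right m |>.mp h
    subst hm1; simp [gk_zero, gk_one]
  unfold gk
  rw [muk_mul h, Pk_mul hm hn h, h.card_divisors_mul]
  push_cast
  ring

lemma gk_pp_zero {p e : ℕ} (hp : p.Prime) (he : k + 1 ≤ e) : gk k (p ^ e) = 0 := by
  have : ¬ KFree (k+1) (p ^ e) := fun H => H p hp (pow_dvd_pow p he)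
  unfold gk muk
  rw [if_neg this]
  ring

lemma gk_pp_le {p e : ℕ} (hk : 2 ≤ k) (hp : p.Prime) (he : 1 ≤ e) (hek : e ≤ k) :
    gk k (p ^ e) ≤ 4 * ((k : ℝ) + 1) / (p : ℝ) ^ 2 := by
  have hP : (2:ℝ) ≤ (p : ℝ) := by exact_mod_cast hp.two_le
  have hA : (2:ℝ) ≤ (p:ℝ) ^ k := le_trans hP (le_self_pow₀ (by linarith) (by omega))
  have hPk : Pk k (p ^ e) = (((p:ℝ) ^ k - 1) ^ 2)⁻¹ := by
    unfold Pk
    rw [Nat.primeFactors_prime_pow (by omega : e ≠ 0) hp]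
    simp
  have hcard : (((p ^ e).divisors.card : ℕ) : ℝ) ≤ (k : ℝ) + 1 := by
    rw [Nat.divisors_prime_pow hp, Finset.card_map, Finset.card_range]
    have : e + 1 ≤ k + 1 := by omega
    exact_mod_cast this
  have hpe : ((p ^ e : ℕ) : ℝ) ≤ (p:ℝ) ^ k := by
    push_cast
    exact pow_le_pow_right₀ (by linarith) hek
  have h0 : gk k (p ^ e) ≤ (((p:ℝ) ^ k - 1) ^ 2)⁻¹ * (((k:ℝ) + 1) * (p:ℝ) ^ k) := by
    unfold gk
    rw [hPk]
    have h1 := muk_le_one (k+1) (p ^ e)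
    have h2 := muk_nonneg (k+1) (p ^ e)
    have h3 : (0:ℝ) ≤ (((p:ℝ) ^ k - 1) ^ 2)⁻¹ := by positivity
    calc muk (k+1) (p^e) * (((p:ℝ) ^ k - 1) ^ 2)⁻¹ * ((((p ^ e).divisors.card : ℕ) : ℝ) * ((p ^ e : ℕ) : ℝ))
        ≤ 1 * (((p:ℝ) ^ k - 1) ^ 2)⁻¹ * ((((k:ℝ) + 1)) * ((p:ℝ) ^ k)) := by
          apply mul_le_mul (by nlinarith) _ (by positivity) (by norm_num; positivity)
          apply mul_le_mul hcard hpe (Nat.cast_nonneg _) (by linarith)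
      _ = (((p:ℝ) ^ k - 1) ^ 2)⁻¹ * (((k:ℝ) + 1) * (p:ℝ) ^ k) := by ring
  have hinv : (((p:ℝ) ^ k - 1) ^ 2)⁻¹ ≤ 4 / ((p:ℝ) ^ k) ^ 2 := by
    rw [inv_eq_one_div, div_le_div_iff₀ (by nlinarith) (by nlinarith)]
    nlinarith
  have h4 : (((p:ℝ) ^ k - 1) ^ 2)⁻¹ * (((k:ℝ) + 1) * (p:ℝ) ^ k)
      ≤ (4 / ((p:ℝ) ^ k) ^ 2) * (((k:ℝ) + 1) * (p:ℝ) ^ k) := by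
    apply mul_le_mul_of_nonneg_right hinv (by positivity)
  have h5 : (4 / ((p:ℝ) ^ k) ^ 2) * (((k:ℝ) + 1) * (p:ℝ) ^ k) = 4 * ((k:ℝ) + 1) / (p:ℝ) ^ k := by
    field_simp
  have h6 : 4 * ((k:ℝ) + 1) / (p:ℝ) ^ k ≤ 4 * ((k : ℝ) + 1) / (p : ℝ) ^ 2 := by
    apply div_le_div_of_nonneg_left (by positivity) (by positivity)
    exact pow_le_pow_right₀ (by linarith) hk
  linarith [h0, h4, h5 ▸ h4]

end G

section SummableG
variable {k : ℕ}

lemma gk_pp_summable (hk : 2 ≤ k) {p : ℕ} (hp : p.Prime) :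
    Summable (fun e : ℕ => ‖gk k (p ^ e)‖) := by
  apply summable_of_ne_finset_zero (s := Finset.range (k + 2))
  intro e he
  rw [Finset.mem_range, not_lt] at he
  rw [gk_pp_zero hp (by omega), norm_zero]

lemma gk_pp_tsum_le (hk : 2 ≤ k) {p : ℕ} (hp : p.Prime) :
    ∑' e : ℕ, gk k (p ^ e) ≤ 1 + 4 * ((k:ℝ) + 1) * k / (p : ℝ) ^ 2 := by
  have hz : ∀ e ∉ Finset.range (k + 1), gk k (p ^ e) = 0 := by
    intro e he
    rw [Finset.mem_range, not_lt] at he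
    exact gk_pp_zero hp (by omega)
  rw [tsum_eq_sum hz, Finset.sum_range_succ']
  have h0 : gk k (p ^ 0) = 1 := by rw [pow_zero]; exact gk_one k
  rw [h0]
  have hsum : ∑ i ∈ Finset.range k, gk k (p ^ (i + 1)) ≤ (k : ℝ) * (4 * ((k:ℝ) + 1) / (p : ℝ) ^ 2) := by
    calc ∑ i ∈ Finset.range k, gk k (p ^ (i + 1))
        ≤ ∑ _i ∈ Finset.range k, (4 * ((k:ℝ) + 1) / (p : ℝ) ^ 2) := by
          apply Finset.sum_le_sum
          intro i hi
          rw [Finset.mem_range] at hi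
          exact gk_pp_le hk hp (by omega) (by omega)
      _ = (k : ℝ) * (4 * ((k:ℝ) + 1) / (p : ℝ) ^ 2) := by
          rw [Finset.sum_const, Finset.card_range, nsmul_eq_mul]
  have : (k : ℝ) * (4 * ((k:ℝ) + 1) / (p : ℝ) ^ 2) = 4 * ((k:ℝ) + 1) * k / (p : ℝ) ^ 2 := by ring
  linarith [this ▸ hsum]

lemma summable_gk (hk : 2 ≤ k) : Summable (gk k) := by
  have hBsum : Summable (fun j : ℕ => ((j : ℝ) ^ 2)⁻¹) := by
    have := Real.summable_one_div_nat_pow.mpr (by norm_num : 1 < 2)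
    simpa [one_div] using this
  set B := ∑' j : ℕ, ((j : ℝ) ^ 2)⁻¹ with hB
  apply summable_of_sum_le (c := Real.exp (4 * ((k:ℝ) + 1) * k * B)) (fun q => gk_nonneg k q)
  intro u
  set n := u.sup id + 1 with hn
  obtain ⟨hs, hhs⟩ := EulerProduct.summable_and_hasSum_smoothNumbers_prod_primesBelow_tsum
    (f := gk k) (gk_one k) (fun {m n} h => gk_mul (by omega) h)
    (fun {p} hp => gk_pp_summable hk hp) n
  have hind : ∀ q ∈ u, gk k q = (Nat.smoothNumbers n).indicator (gk k) q := by
    intro q hq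
    by_cases hsm : q ∈ Nat.smoothNumbers n
    · rw [Set.indicator_of_mem hsm]
    · rw [Set.indicator_of_notMem hsm]
      rcases eq_or_ne q 0 with rfl | hq0
      · exact gk_zero k
      · exfalso
        apply hsm
        rw [Nat.mem_smoothNumbers']
        intro p hp hpd
        have h1 : p ≤ q := Nat.le_of_dvd (Nat.pos_of_ne_zero hq0) hpd
        have h2 : q ≤ u.sup id := Finset.le_sup (f := id) hq
        omega
  have hsub : Summable ((Nat.smoothNumbers n).indicator (gk k)) := by
    rw [← summable_subtype_iff_indicator]
    exact hs.of_norm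
  calc ∑ q ∈ u, gk k q = ∑ q ∈ u, (Nat.smoothNumbers n).indicator (gk k) q :=
        Finset.sum_congr rfl hind
    _ ≤ ∑' q : ℕ, (Nat.smoothNumbers n).indicator (gk k) q := by
        apply Summable.sum_le_tsum u _ hsub
        intro q _
        exact Set.indicator_apply_nonneg (fun _ => gk_nonneg k q)
    _ = ∑' q : (Nat.smoothNumbers n), gk k q := (tsum_subtype _ _).symm
    _ = ∏ p ∈ n.primesBelow, ∑' e : ℕ, gk k (p ^ e) := hhs.tsum_eq
    _ ≤ ∏ p ∈ n.primesBelow, Real.exp (4 * ((k:ℝ) + 1) * k / (p : ℝ) ^ 2) := by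
        apply Finset.prod_le_prod
        · intro p hp
          exact tsum_nonneg (fun e => gk_nonneg k (p ^ e))
        · intro p hp
          have h1 := gk_pp_tsum_le hk (Nat.prime_of_mem_primesBelow hp)
          have h2 := Real.add_one_le_exp (4 * ((k:ℝ) + 1) * k / (p : ℝ) ^ 2)
          linarith
    _ = Real.exp (∑ p ∈ n.primesBelow, 4 * ((k:ℝ) + 1) * k / (p : ℝ) ^ 2) :=
        (Real.exp_sum _ _).symm
    _ ≤ Real.exp (4 * ((k:ℝ) + 1) * k * B) := by
        apply Real.exp_le_exp.mpr
        have h3 : ∑ p ∈ n.primesBelow, 4 * ((k:ℝ) + 1) * k / (p : ℝ) ^ 2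
            = 4 * ((k:ℝ) + 1) * k * ∑ p ∈ n.primesBelow, ((p : ℝ) ^ 2)⁻¹ := by
          rw [Finset.mul_sum]
          apply Finset.sum_congr rfl
          intro p _
          rw [div_eq_mul_inv]
        rw [h3]
        apply mul_le_mul_of_nonneg_left _ (by positivity)
        exact Summable.sum_le_tsum _ (fun j _ => by positivity) hBsum
end SummableG

section Pairs
variable {k : ℕ}

noncomputable def P2 (k : ℕ) (x : ℕ × ℕ) : ℝ :=
  muk (k + 1) (x.1 * x.2) * Pk k (x.1 * x.2) * x.2

lemma P2_nonneg (k : ℕ) (x : ℕ × ℕ) : 0 ≤ P2 k x := by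
  unfold P2
  have := muk_nonneg (k+1) (x.1 * x.2)
  have := Pk_nonneg k (x.1 * x.2)
  positivity

lemma card_antidiag (q : ℕ) : q.divisorsAntidiagonal.card = q.divisors.card := by
  rw [← Nat.map_div_right_divisors, Finset.card_map]

lemma summable_P2 (hk : 2 ≤ k) : Summable (P2 k) := by
  apply summable_of_sum_le (c := ∑' q, gk k q) (fun x => P2_nonneg k x)
  intro u
  classical
  set u' := u.filter (fun x : ℕ × ℕ => x.1 ≠ 0 ∧ x.2 ≠ 0) with hu'
  have h1 : ∑ x ∈ u, P2 k x = ∑ x ∈ u', P2 k x := by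
    rw [eq_comm]
    apply Finset.sum_subset (Finset.filter_subset _ _)
    intro x hx hx'
    rw [Finset.mem_filter] at hx'
    push_neg at hx'
    rcases eq_or_ne x.1 0 with h0 | h0
    · unfold P2
      rw [h0, zero_mul, muk_zero (by omega)]
      ring
    · have h2 : x.2 = 0 := hx' hx h0
      unfold P2
      rw [h2]
      push_cast
      ring
  have h2 : ∀ x ∈ u', (fun y : ℕ × ℕ => y.1 * y.2) x ∈ u'.image (fun y : ℕ × ℕ => y.1 * y.2) :=
    fun x hx => Finset.mem_image_of_mem _ hx
  rw [h1, ← Finset.sum_fiberwise_of_maps_to h2 (P2 k)]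
  have h3 : ∀ q ∈ u'.image (fun y : ℕ × ℕ => y.1 * y.2),
      ∑ x ∈ u'.filter (fun y => y.1 * y.2 = q), P2 k x ≤ gk k q := by
    intro q hq
    obtain ⟨x₀, hx₀, hx₀q⟩ := Finset.mem_image.mp hq
    rw [Finset.mem_filter] at hx₀
    have hq0 : q ≠ 0 := by
      rw [← hx₀q]
      exact Nat.mul_ne_zero hx₀.2.1 hx₀.2.2
    have hbound : ∀ x ∈ u'.filter (fun y => y.1 * y.2 = q),
        P2 k x ≤ muk (k+1) q * Pk k q * q := by
      intro x hx
      rw [Finset.mem_filter] at hx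
      have hxq : x.1 * x.2 = q := hx.2
      have hx2q : x.2 ≤ q := by
        apply Nat.le_of_dvd (Nat.pos_of_ne_zero hq0)
        exact ⟨x.1, by rw [← hxq]; ring⟩
      unfold P2
      rw [hxq]
      have := muk_nonneg (k+1) q
      have := Pk_nonneg k q
      have hx2q' : ((x.2 : ℕ) : ℝ) ≤ (q : ℝ) := by exact_mod_cast hx2q
      apply mul_le_mul_of_nonneg_left hx2q' (by positivity)
    have hsub : u'.filter (fun y => y.1 * y.2 = q) ⊆ q.divisorsAntidiagonal := by
      intro x hx
      rw [Finset.mem_filter] at hx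
      rw [Nat.mem_divisorsAntidiagonal]
      exact ⟨hx.2, hq0⟩
    calc ∑ x ∈ u'.filter (fun y => y.1 * y.2 = q), P2 k x
        ≤ ∑ _x ∈ u'.filter (fun y => y.1 * y.2 = q), (muk (k+1) q * Pk k q * q) :=
          Finset.sum_le_sum hbound
      _ = ((u'.filter (fun y => y.1 * y.2 = q)).card : ℝ) * (muk (k+1) q * Pk k q * q) := by
          rw [Finset.sum_const, nsmul_eq_mul]
      _ ≤ (q.divisors.card : ℝ) * (muk (k+1) q * Pk k q * q) := by
          apply mul_le_mul_of_nonneg_right _ (by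
            have := muk_nonneg (k+1) q
            have := Pk_nonneg k q
            positivity)
          rw [← card_antidiag q]
          exact_mod_cast Finset.card_le_card hsub
      _ = gk k q := by unfold gk; ring
  calc ∑ q ∈ u'.image (fun y : ℕ × ℕ => y.1 * y.2),
        ∑ x ∈ u'.filter (fun y => y.1 * y.2 = q), P2 k x
      ≤ ∑ q ∈ u'.image (fun y : ℕ × ℕ => y.1 * y.2), gk k q := Finset.sum_le_sum h3
    _ ≤ ∑' q, gk k q := Summable.sum_le_tsum _ (fun q _ => gk_nonneg k q) (summable_gk hk)

end Pairs

section Count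

lemma moebius_sum_divisors (n : ℕ) :
    (∑ d ∈ n.divisors, (ArithmeticFunction.moebius d : ℤ)) = if n = 1 then 1 else 0 := by
  have h := congrArg (fun f : ArithmeticFunction ℤ => f n) ArithmeticFunction.moebius_mul_coe_zeta
  simp only [ArithmeticFunction.coe_mul_zeta_apply, ArithmeticFunction.one_apply] at h
  exact h

lemma divisors_gcd_eq {q : ℕ} (hq : q ≠ 0) (m : ℕ) :
    (Nat.gcd m q).divisors = q.divisors.filter (fun d => d ∣ m) := by
  ext d
  rw [Nat.mem_divisors, Finset.mem_filter, Nat.mem_divisors, Nat.dvd_gcd_iff]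
  constructor
  · rintro ⟨⟨h1, h2⟩, -⟩
    exact ⟨⟨h2, hq⟩, h1⟩
  · rintro ⟨⟨h2, -⟩, h1⟩
    exact ⟨⟨h1, h2⟩, fun h => hq (Nat.gcd_eq_zero_iff.mp h).2⟩

lemma Icc_one_eq_Ioc (M : ℕ) : Finset.Icc 1 M = Finset.Ioc 0 M := by
  ext x
  simp only [Finset.mem_Icc, Finset.mem_Ioc]
  omega

lemma count_eq {q : ℕ} (hq : q ≠ 0) (M : ℕ) :
    ((((Finset.Icc 1 M).filter fun m => Nat.gcd m q = 1).card : ℕ) : ℝ)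
      = ∑ d ∈ q.divisors, (ArithmeticFunction.moebius d : ℝ) * ((M / d : ℕ) : ℝ) := by
  have step1 : ((((Finset.Icc 1 M).filter fun m => Nat.gcd m q = 1).card : ℕ) : ℝ)
      = ∑ m ∈ Finset.Icc 1 M, (if Nat.gcd m q = 1 then (1:ℝ) else 0) := by
    rw [Finset.card_filter]
    push_cast
    apply Finset.sum_congr rfl
    intro m _
    split <;> norm_num
  rw [step1]
  have step2 : ∀ m, (if Nat.gcd m q = 1 then (1:ℝ) else 0)
      = ∑ d ∈ q.divisors, (if d ∣ m then (ArithmeticFunction.moebius d : ℝ) else 0) := by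
    intro m
    have h1 : ((∑ d ∈ (Nat.gcd m q).divisors, (ArithmeticFunction.moebius d : ℤ) : ℤ) : ℝ)
        = ((if Nat.gcd m q = 1 then (1:ℤ) else 0 : ℤ) : ℝ) :=
      congrArg Int.cast (moebius_sum_divisors (Nat.gcd m q))
    rw [divisors_gcd_eq hq m] at h1
    push_cast at h1
    rw [Finset.sum_filter] at h1
    rw [← h1]
  rw [Finset.sum_congr rfl (fun m _ => step2 m), Finset.sum_comm]
  apply Finset.sum_congr rfl
  intro d _
  rw [← Finset.sum_filter, Finset.sum_const, nsmul_eq_mul, Icc_one_eq_Ioc,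
    Nat.Ioc_filter_dvd_card_eq_div]
  push_cast
  ring

end Count

section FkSec
variable {k N : ℕ}

noncomputable def Fk (k N : ℕ) (x : ℕ × ℕ) : ℝ :=
  (ArithmeticFunction.moebius x.1 : ℝ) * muk (k + 1) (x.1 * x.2) * Pk k (x.1 * x.2) *
    ((x.2 / N : ℕ) : ℝ)

lemma abs_moebius_le_one' (n : ℕ) : |(ArithmeticFunction.moebius n : ℝ)| ≤ 1 := by
  have := ArithmeticFunction.abs_moebius_le_one (n := n)
  exact_mod_cast this

lemma Fk_abs_le_P2 (x : ℕ × ℕ) : |Fk k N x| ≤ P2 k x := by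
  unfold Fk P2
  have h1 := muk_nonneg (k+1) (x.1 * x.2)
  have h2 := Pk_nonneg k (x.1 * x.2)
  have h3 : ((x.2 / N : ℕ) : ℝ) ≤ (x.2 : ℝ) := by exact_mod_cast Nat.div_le_self x.2 N
  have h4 : (0:ℝ) ≤ ((x.2 / N : ℕ) : ℝ) := Nat.cast_nonneg _
  rw [abs_mul, abs_mul, abs_mul, abs_of_nonneg h1, abs_of_nonneg h2, abs_of_nonneg h4]
  calc |(ArithmeticFunction.moebius x.1 : ℝ)| * muk (k+1) (x.1*x.2) * Pk k (x.1*x.2) *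
        ((x.2 / N : ℕ) : ℝ)
      ≤ 1 * muk (k+1) (x.1*x.2) * Pk k (x.1*x.2) * (x.2 : ℝ) := by
        apply mul_le_mul _ h3 h4 (by positivity)
        apply mul_le_mul_of_nonneg_right _ h2
        apply mul_le_mul_of_nonneg_right (abs_moebius_le_one' x.1) h1
    _ = muk (k+1) (x.1*x.2) * Pk k (x.1*x.2) * (x.2 : ℝ) := by ring

lemma summable_Fk (hk : 2 ≤ k) : Summable (Fk k N) := by
  apply Summable.of_abs
  exact Summable.of_nonneg_of_le (fun x => abs_nonneg _) (fun x => Fk_abs_le_P2 x)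
    (summable_P2 hk)

lemma A_eq (hN : 1 ≤ N) (q : ℕ) :
    muk (k+1) q * Pk k q *
      ((((Finset.Icc 1 (q / N)).filter fun m => Nat.gcd m q = 1)).card : ℝ)
      = ∑ x ∈ q.divisorsAntidiagonal, Fk k N x := by
  rcases eq_or_ne q 0 with rfl | hq
  · rw [muk_zero (by omega : 1 ≤ k+1), Nat.divisorsAntidiagonal_zero, Finset.sum_empty]
    ring
  · rw [count_eq hq (q / N), Finset.mul_sum, ← Nat.map_div_right_divisors, Finset.sum_map]
    apply Finset.sum_congr rfl
    intro d hd
    have hdvd : d ∣ q := (Nat.mem_divisors.mp hd).1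
    have hcancel : d * (q / d) = q := Nat.mul_div_cancel' hdvd
    change _ = Fk k N (d, q / d)
    unfold Fk
    simp only [hcancel]
    have hdiv : q / N / d = q / d / N := by
      rw [Nat.div_div_eq_div_mul, Nat.div_div_eq_div_mul, mul_comm]
    rw [hdiv]
    ring

lemma tsum_antidiag_eq (hk : 2 ≤ k) :
    (∑' q : ℕ, ∑ x ∈ q.divisorsAntidiagonal, Fk k N x) = ∑' x : ℕ × ℕ, Fk k N x := by
  have hfib := (summable_Fk (N := N) hk).hasSum.tsum_fiberwise (fun p : ℕ × ℕ => p.1 * p.2)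
  rw [← hfib.tsum_eq]
  apply tsum_congr
  intro q
  rcases eq_or_ne q 0 with rfl | hq
  · rw [Nat.divisorsAntidiagonal_zero, Finset.sum_empty]
    have hz : ∀ x : (fun p : ℕ × ℕ => p.1 * p.2) ⁻¹' {0}, Fk k N (x : ℕ × ℕ) = 0 := by
      rintro ⟨⟨a, b⟩, hab⟩
      simp only [Set.mem_preimage, Set.mem_singleton_iff] at hab
      rcases Nat.mul_eq_zero.mp hab with rfl | rfl
      · unfold Fk; simp
      · unfold Fk
        simp only [Nat.mul_zero, muk_zero (by omega : 1 ≤ k+1)]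
        simp
    rw [tsum_congr hz, tsum_zero]
  · rw [show (fun p : ℕ × ℕ => p.1 * p.2) ⁻¹' {q} = ↑(q.divisorsAntidiagonal) by
      ext x; simp [Nat.mem_divisorsAntidiagonal, hq, and_comm],
      Finset.tsum_subtype' q.divisorsAntidiagonal (Fk k N)]

end FkSec

section EESec
variable {k N : ℕ}

noncomputable def EE (k N : ℕ) (y : (ℕ × ℕ) × ℕ) : ℝ :=
  (if 0 < y.2 ∧ N ∣ y.2 then (1:ℝ) else 0) *
    ((if y.2 ≤ y.1.1 then (1:ℝ) else 0) * (ArithmeticFunction.moebius y.1.2 : ℝ) *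
      muk (k + 1) (y.1.2 * y.1.1) * Pk k (y.1.2 * y.1.1))

lemma EE_abs_le (x : ℕ × ℕ) (c : ℕ) :
    |EE k N (x, c)| ≤ (if c ∈ (Finset.Ioc 0 x.1).filter (fun c => N ∣ c) then (1:ℝ) else 0) *
      (muk (k + 1) (x.2 * x.1) * Pk k (x.2 * x.1)) := by
  have h1 := muk_nonneg (k+1) (x.2 * x.1)
  have h2 := Pk_nonneg k (x.2 * x.1)
  by_cases hc : (0 < c ∧ N ∣ c) ∧ c ≤ x.1
  · have hmem : c ∈ (Finset.Ioc 0 x.1).filter (fun c => N ∣ c) := by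
      rw [Finset.mem_filter, Finset.mem_Ioc]
      exact ⟨⟨hc.1.1, hc.2⟩, hc.1.2⟩
    rw [if_pos hmem, one_mul]
    unfold EE
    rw [if_pos hc.1, if_pos hc.2]
    simp only [one_mul]
    rw [abs_mul, abs_mul, abs_of_nonneg h1, abs_of_nonneg h2]
    calc |(ArithmeticFunction.moebius x.2 : ℝ)| * muk (k+1) (x.2*x.1) * Pk k (x.2*x.1)
        ≤ 1 * muk (k+1) (x.2*x.1) * Pk k (x.2*x.1) := by
          apply mul_le_mul_of_nonneg_right _ h2
          exact mul_le_mul_of_nonneg_right (abs_moebius_le_one' x.2) h1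
      _ = muk (k+1) (x.2*x.1) * Pk k (x.2*x.1) := by ring
  · have hEE : EE k N (x, c) = 0 := by
      unfold EE
      rw [not_and_or] at hc
      rcases hc with hc | hc
      · rw [if_neg hc]; ring
      · rw [if_neg hc]; ring
    rw [hEE, abs_zero]
    positivity

lemma tsum_ite_finset {w : ℝ} (S : Finset ℕ) :
    ∑' c : ℕ, (if c ∈ S then w else 0) = (S.card : ℝ) * w := by
  rw [tsum_eq_sum (s := S) (fun c hc => if_neg hc)]
  rw [Finset.sum_congr rfl (fun c hc => if_pos hc), Finset.sum_const, nsmul_eq_mul]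

lemma summable_EE_abs (hk : 2 ≤ k) : Summable (fun y => |EE k N y|) := by
  rw [summable_prod_of_nonneg (fun y => abs_nonneg _)]
  constructor
  · intro x
    apply summable_of_ne_finset_zero (s := Finset.range (x.1 + 1))
    intro c hcr
    rw [Finset.mem_range, not_lt] at hcr
    have : EE k N (x, c) = 0 := by
      unfold EE
      rw [if_neg (by omega : ¬ c ≤ x.1)]
      ring
    rw [this, abs_zero]
  · have hbound : ∀ x : ℕ × ℕ, (∑' c, |EE k N (x, c)|) ≤ P2 k (x.2, x.1) := by
      intro x
      have hS : Summable (fun c : ℕ =>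
          (if c ∈ (Finset.Ioc 0 x.1).filter (fun c => N ∣ c) then (1:ℝ) else 0) *
            (muk (k + 1) (x.2 * x.1) * Pk k (x.2 * x.1))) := by
        apply summable_of_ne_finset_zero (s := (Finset.Ioc 0 x.1).filter (fun c => N ∣ c))
        intro c hc
        rw [if_neg hc, zero_mul]
      have hL : Summable (fun c : ℕ => |EE k N (x, c)|) := by
        apply summable_of_ne_finset_zero (s := Finset.range (x.1 + 1))
        intro c hcr
        rw [Finset.mem_range, not_lt] at hcr
        have : EE k N (x, c) = 0 := by
          unfold EE
          rw [if_neg (by omega : ¬ c ≤ x.1)]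
          ring
        rw [this, abs_zero]
      calc ∑' c, |EE k N (x, c)|
          ≤ ∑' c : ℕ, (if c ∈ (Finset.Ioc 0 x.1).filter (fun c => N ∣ c) then (1:ℝ) else 0) *
              (muk (k + 1) (x.2 * x.1) * Pk k (x.2 * x.1)) :=
            Summable.tsum_le_tsum (fun c => EE_abs_le x c) hL hS
        _ = ((((Finset.Ioc 0 x.1).filter (fun c => N ∣ c)).card : ℝ)) *
              (muk (k + 1) (x.2 * x.1) * Pk k (x.2 * x.1)) := by
            rw [← tsum_ite_finset]
            apply tsum_congr
            intro c
            split <;> ring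
        _ ≤ (x.1 : ℝ) * (muk (k + 1) (x.2 * x.1) * Pk k (x.2 * x.1)) := by
            apply mul_le_mul_of_nonneg_right _ (by
              have := muk_nonneg (k+1) (x.2*x.1); have := Pk_nonneg k (x.2*x.1); positivity)
            have hcard : ((Finset.Ioc 0 x.1).filter (fun c => N ∣ c)).card ≤ x.1 := by
              calc ((Finset.Ioc 0 x.1).filter (fun c => N ∣ c)).card
                  ≤ (Finset.Ioc 0 x.1).card := Finset.card_le_card (Finset.filter_subset _ _)
                _ = x.1 := by rw [Nat.card_Ioc]; omega
            exact_mod_cast hcard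
        _ = P2 k (x.2, x.1) := by unfold P2; ring
    exact Summable.of_nonneg_of_le (fun x => tsum_nonneg (fun c => abs_nonneg _)) hbound
      ((summable_P2 hk).prod_symm)

lemma summable_EE (hk : 2 ≤ k) : Summable (EE k N) :=
  (summable_EE_abs hk).of_abs

end EESec

/-- `Z̃_k(N) = Σ_{c ≥ 1, N ∣ c} z_k(c)`. -/
theorem statement4 (k N : ℕ) (hk : 2 ≤ k) (hN : 1 ≤ N) :
    Ztilde k N = ∑' c : ℕ, if 0 < c ∧ N ∣ c then zk k c else 0 := by
  have hL : Ztilde k N = ∑' x : ℕ × ℕ, Fk k N x := by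
    unfold Ztilde
    rw [tsum_congr (fun q => A_eq (k := k) hN q)]
    exact tsum_antidiag_eq hk
  have hstep1 : ∀ c : ℕ, (if 0 < c ∧ N ∣ c then zk k c else 0)
      = ∑' x : ℕ × ℕ, EE k N (x, c) := by
    intro c
    by_cases hc : 0 < c ∧ N ∣ c
    · rw [if_pos hc]
      have hsum : Summable (fun x : ℕ × ℕ => EE k N (x, c)) :=
        (summable_EE (N := N) hk).comp_injective
          (i := fun x : ℕ × ℕ => (x, c)) (fun a b h => (Prod.ext_iff.mp h).1)
      have hinner : Summable (fun x : ℕ × ℕ =>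
          (if c ≤ x.1 then (1:ℝ) else 0) * (ArithmeticFunction.moebius x.2 : ℝ) *
            muk (k + 1) (x.2 * x.1) * Pk k (x.2 * x.1)) := by
        apply hsum.congr
        intro x
        unfold EE
        rw [if_pos hc, one_mul]
      have h1 : zk k c = ∑' x : ℕ × ℕ,
          ((if c ≤ x.1 then (1:ℝ) else 0) * (ArithmeticFunction.moebius x.2 : ℝ) *
            muk (k + 1) (x.2 * x.1) * Pk k (x.2 * x.1)) := (Summable.tsum_prod hinner).symm
      rw [h1]
      apply tsum_congr
      intro x
      unfold EE
      rw [if_pos hc, one_mul]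
    · rw [if_neg hc]
      have : ∀ x : ℕ × ℕ, EE k N (x, c) = 0 := by
        intro x
        unfold EE
        rw [if_neg hc, zero_mul]
      rw [tsum_congr this, tsum_zero]
  have hstep3 : ∀ x : ℕ × ℕ, (∑' c, EE k N (x, c)) = Fk k N (x.2, x.1) := by
    intro x
    have hEEeq : ∀ c, EE k N (x, c) =
        (if c ∈ (Finset.Ioc 0 x.1).filter (fun c => N ∣ c) then
          ((ArithmeticFunction.moebius x.2 : ℝ) * muk (k+1) (x.2*x.1) * Pk k (x.2*x.1))
        else 0) := by
      intro c
      unfold EE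
      by_cases h1 : (0 < c ∧ N ∣ c)
      · by_cases h2 : c ≤ x.1
        · have hmem : c ∈ (Finset.Ioc 0 x.1).filter (fun c => N ∣ c) := by
            rw [Finset.mem_filter, Finset.mem_Ioc]; exact ⟨⟨h1.1, h2⟩, h1.2⟩
          rw [if_pos h1, if_pos h2, if_pos hmem]
          ring
        · have hmem : c ∉ (Finset.Ioc 0 x.1).filter (fun c => N ∣ c) := by
            rw [Finset.mem_filter, Finset.mem_Ioc]; tauto
          rw [if_pos h1, if_neg h2, if_neg hmem]
          ring
      · have hmem : c ∉ (Finset.Ioc 0 x.1).filter (fun c => N ∣ c) := by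
          rw [Finset.mem_filter, Finset.mem_Ioc]; tauto
        rw [if_neg h1, if_neg hmem]
        ring
    rw [tsum_congr hEEeq, tsum_ite_finset, Nat.Ioc_filter_dvd_card_eq_div]
    unfold Fk
    ring
  have hstep4 : (∑' x : ℕ × ℕ, Fk k N (x.2, x.1)) = ∑' x : ℕ × ℕ, Fk k N x :=
    (Equiv.prodComm ℕ ℕ).tsum_eq (Fk k N)
  have hR : (∑' c : ℕ, if 0 < c ∧ N ∣ c then zk k c else 0) = ∑' x : ℕ × ℕ, Fk k N x := by
    calc (∑' c : ℕ, if 0 < c ∧ N ∣ c then zk k c else 0)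
        = ∑' c : ℕ, ∑' x : ℕ × ℕ, EE k N (x, c) := tsum_congr hstep1
      _ = ∑' x : ℕ × ℕ, ∑' c : ℕ, EE k N (x, c) :=
          Summable.tsum_comm (f := fun (x : ℕ × ℕ) (c : ℕ) => EE k N (x, c)) (summable_EE hk)
      _ = ∑' x : ℕ × ℕ, Fk k N (x.2, x.1) := tsum_congr hstep3
      _ = ∑' x : ℕ × ℕ, Fk k N x := hstep4
  rw [hL, hR]
end

section
/- For every integer k ≥ 2, Π_{p prime} (1 − 2p/((p+1)p^k)) ≥ ζ(k − 1/2)^{−1}, where ζ is the Riemann zeta function; consequently c_k = (2k/(2k−1)) · (ζ(2−1/k)/ζ(2)) · (1 + O(2^{−k})) with an absolute implied constant. -/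
open scoped Classical BigOperators Topology
open Filter Asymptotics

lemma sqrt_tail : ∑' n : ℕ, ((n : ℝ) + 2) ^ (-(3:ℝ)/2) ≤ 2 := by
  have key : ∀ n : ℕ, ((n : ℝ) + 2) ^ (-(3:ℝ)/2) ≤
      2 / Real.sqrt ((n:ℝ) + 1) - 2 / Real.sqrt ((n:ℝ) + 2) := by
    intro n
    set a := Real.sqrt ((n:ℝ) + 1) with ha'
    set b := Real.sqrt ((n:ℝ) + 2) with hb'
    have ha : 0 < a := Real.sqrt_pos.mpr (by positivity)
    have hb : 0 < b := Real.sqrt_pos.mpr (by positivity)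
    have hab : a ≤ b := Real.sqrt_le_sqrt (by linarith)
    have ha2 : a ^ 2 = (n:ℝ) + 1 := Real.sq_sqrt (by positivity)
    have hb2 : b ^ 2 = (n:ℝ) + 2 := Real.sq_sqrt (by positivity)
    have hrw : ((n : ℝ) + 2) ^ (-(3:ℝ)/2) = (b ^ 3)⁻¹ := by
      rw [← hb2, ← Real.rpow_natCast b 2, ← Real.rpow_mul hb.le, ← Real.rpow_natCast b 3,
        ← Real.rpow_neg hb.le]
      norm_num
    rw [hrw]
    rw [div_sub_div _ _ ha.ne' hb.ne', inv_eq_one_div,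
      div_le_div_iff₀ (by positivity) (by positivity)]
    nlinarith [mul_pos ha hb, sq_nonneg (a - b), mul_le_mul_of_nonneg_right hab hb.le,
      mul_pos (mul_pos ha hb) hb, mul_le_mul_of_nonneg_right
        (mul_le_mul_of_nonneg_right hab hb.le) hb.le]
  refine Real.tsum_le_of_sum_range_le (fun n => Real.rpow_nonneg (by positivity) _) (fun n => ?_)
  calc ∑ i ∈ Finset.range n, ((i : ℝ) + 2) ^ (-(3:ℝ)/2)
      ≤ ∑ i ∈ Finset.range n,
        (2 / Real.sqrt ((i:ℝ) + 1) - 2 / Real.sqrt ((i:ℝ) + 2)) :=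
        Finset.sum_le_sum fun i _ => key i
    _ = 2 / Real.sqrt ((0:ℕ) + 1) - 2 / Real.sqrt ((n:ℝ) + 1) := by
        have := Finset.sum_range_sub' (fun i : ℕ => 2 / Real.sqrt ((i:ℝ) + 1)) n
        rw [← this]
        refine Finset.sum_congr rfl fun i _ => ?_
        push_cast
        ring_nf
    _ ≤ 2 := by
        have h1 : (0:ℝ) ≤ 2 / Real.sqrt ((n:ℝ) + 1) := by positivity
        simp only [Nat.cast_zero]
        rw [zero_add, Real.sqrt_one]
        linarith




lemma zetaR_summable {s : ℝ} (hs : 1 < s) : Summable (fun n : ℕ => 1 / (n:ℝ) ^ s) :=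
  Real.summable_one_div_nat_rpow.mpr hs

lemma zetaR_ge_one {s : ℝ} (hs : 1 < s) : 1 ≤ zetaR s := by
  have h := Summable.le_tsum (zetaR_summable hs) 1 (fun j _ => by positivity)
  simpa [zetaR, Real.one_rpow] using h

lemma tail_summable {s : ℝ} (hs : 1 < s) : Summable (fun n : ℕ => 1 / ((n:ℝ) + 2) ^ s) := by
  have h := (summable_nat_add_iff 2).mpr (zetaR_summable hs)
  refine h.congr fun n => ?_
  push_cast
  ring_nf

lemma rpow_tail_summable : Summable (fun n : ℕ => ((n:ℝ) + 2) ^ (-(3:ℝ)/2)) := by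
  have h : Summable (fun n : ℕ => (n:ℝ) ^ (-(3:ℝ)/2)) :=
    Real.summable_nat_rpow.mpr (by norm_num)
  have h2 := (summable_nat_add_iff 2).mpr h
  refine h2.congr fun n => ?_
  push_cast
  ring_nf

lemma zetaR_le {s : ℝ} (hs : 3/2 ≤ s) : zetaR s ≤ 1 + 2 ^ ((5:ℝ)/2 - s) := by
  have hs1 : 1 < s := by linarith
  have hsum := zetaR_summable hs1
  have hsum1 : Summable (fun n : ℕ => 1 / ((n:ℝ) + 1) ^ s) := by
    have h := (summable_nat_add_iff 1).mpr hsum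
    refine h.congr fun n => ?_
    push_cast
    ring_nf
  have h0 : zetaR s = 1 / ((0:ℕ):ℝ) ^ s + (1 / ((0:ℝ) + 1) ^ s
      + ∑' n : ℕ, 1 / (((n:ℝ) + 1) + 1) ^ s) := by
    rw [zetaR, Summable.tsum_eq_zero_add hsum]
    congr 1
    have e1 : ∑' b : ℕ, 1 / ((↑(b+1)):ℝ) ^ s = ∑' b : ℕ, 1 / ((b:ℝ) + 1) ^ s :=
      tsum_congr fun b => by push_cast; ring_nf
    rw [e1, Summable.tsum_eq_zero_add hsum1]
    congr 1
    · norm_num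
    · exact tsum_congr fun b => by push_cast; ring_nf
  have hz : (1:ℝ) / ((0:ℕ):ℝ) ^ s = 0 := by
    rw [Nat.cast_zero, Real.zero_rpow (by linarith), div_zero]
  have ho : (1:ℝ) / ((0:ℝ) + 1) ^ s = 1 := by
    rw [zero_add, Real.one_rpow, div_one]
  -- tail bound
  have hterm : ∀ n : ℕ, 1 / (((n:ℝ) + 1) + 1) ^ s ≤
      2 ^ ((3:ℝ)/2 - s) * ((n:ℝ) + 2) ^ (-(3:ℝ)/2) := by
    intro n
    have hx : (2:ℝ) ≤ (n:ℝ) + 2 := by linarith [Nat.cast_nonneg (α := ℝ) n]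
    have hxpos : (0:ℝ) < (n:ℝ) + 2 := by linarith
    have hsplit : ((n:ℝ) + 2) ^ (-s) = ((n:ℝ) + 2) ^ (-(3:ℝ)/2) * ((n:ℝ) + 2) ^ ((3:ℝ)/2 - s) := by
      rw [← Real.rpow_add hxpos]
      ring_nf
    have hle : ((n:ℝ) + 2) ^ ((3:ℝ)/2 - s) ≤ 2 ^ ((3:ℝ)/2 - s) :=
      Real.rpow_le_rpow_of_nonpos two_pos hx (by linarith)
    calc 1 / (((n:ℝ) + 1) + 1) ^ s = ((n:ℝ) + 2) ^ (-s) := by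
          rw [show (n:ℝ) + 1 + 1 = (n:ℝ) + 2 by ring, Real.rpow_neg hxpos.le, one_div]
      _ = ((n:ℝ) + 2) ^ (-(3:ℝ)/2) * ((n:ℝ) + 2) ^ ((3:ℝ)/2 - s) := hsplit
      _ ≤ ((n:ℝ) + 2) ^ (-(3:ℝ)/2) * 2 ^ ((3:ℝ)/2 - s) :=
          mul_le_mul_of_nonneg_left hle (Real.rpow_nonneg hxpos.le _)
      _ = 2 ^ ((3:ℝ)/2 - s) * ((n:ℝ) + 2) ^ (-(3:ℝ)/2) := mul_comm _ _
  have htail : ∑' n : ℕ, 1 / (((n:ℝ) + 1) + 1) ^ s ≤ 2 ^ ((5:ℝ)/2 - s) := by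
    have h1 : ∑' n : ℕ, 1 / (((n:ℝ) + 1) + 1) ^ s ≤
        ∑' n : ℕ, 2 ^ ((3:ℝ)/2 - s) * ((n:ℝ) + 2) ^ (-(3:ℝ)/2) := by
      refine Summable.tsum_le_tsum hterm ?_ (rpow_tail_summable.mul_left _)
      · refine (tail_summable hs1).congr fun n => ?_
        ring_nf
    rw [tsum_mul_left] at h1
    have h2 : (2:ℝ) ^ ((3:ℝ)/2 - s) * (∑' n : ℕ, ((n:ℝ) + 2) ^ (-(3:ℝ)/2)) ≤
        2 ^ ((3:ℝ)/2 - s) * 2 := mul_le_mul_of_nonneg_left sqrt_tail (by positivity)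
    have h3 : (2:ℝ) ^ ((3:ℝ)/2 - s) * 2 = 2 ^ ((5:ℝ)/2 - s) := by
      rw [show (5:ℝ)/2 - s = (3:ℝ)/2 - s + 1 by ring, Real.rpow_add two_pos, Real.rpow_one]
    linarith
  rw [h0, hz, ho]
  linarith




lemma finprod_one_sub_ge {s : ℝ} (hs : 1 < s) (S : Finset Nat.Primes) :
    (zetaR s)⁻¹ ≤ ∏ p ∈ S, (1 - ((p:ℕ):ℝ) ^ (-s)) := by
  have hs0 : -s ≠ 0 := by intro h; rw [neg_eq_zero] at h; linarith
  set F : ℕ →*₀ ℝ :=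
    { toFun := fun n => (n:ℝ) ^ (-s),
      map_zero' := by simp [Real.zero_rpow hs0],
      map_one' := by simp,
      map_mul' := fun m n => by
        push_cast
        exact Real.mul_rpow (Nat.cast_nonneg m) (Nat.cast_nonneg n) } with hF
  have hFval : ∀ n : ℕ, F n = (n:ℝ) ^ (-s) := fun n => rfl
  have hnorm : Summable (fun n : ℕ => ‖F n‖) := by
    have : Summable (fun n : ℕ => (n:ℝ) ^ (-s)) := Real.summable_nat_rpow.mpr (by linarith)
    refine this.congr fun n => ?_
    rw [hFval, Real.norm_eq_abs, abs_of_nonneg (Real.rpow_nonneg (Nat.cast_nonneg n) _)]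
  have hEuler : HasProd (fun p : Nat.Primes => (1 - F (p:ℕ))⁻¹) (zetaR s) := by
    have h := EulerProduct.eulerProduct_completely_multiplicative_hasProd hnorm
    have he : ∑' n : ℕ, F n = zetaR s := by
      rw [zetaR]
      refine tsum_congr fun n => ?_
      rw [hFval, Real.rpow_neg (Nat.cast_nonneg n), one_div]
    rwa [he] at h
  have hfac : ∀ p : Nat.Primes, ((p:ℕ):ℝ) ^ (-s) < 1 := fun p =>
    Real.rpow_lt_one_of_one_lt_of_neg
      (by exact_mod_cast p.prop.one_lt) (by linarith)
  have hfac0 : ∀ p : Nat.Primes, (0:ℝ) ≤ ((p:ℕ):ℝ) ^ (-s) := fun p =>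
    Real.rpow_nonneg (Nat.cast_nonneg _) _
  -- finite partial products of (1 - F p)⁻¹ are at most zetaR s
  have hpartial : ∏ p ∈ S, (1 - F (p:ℕ))⁻¹ ≤ zetaR s := by
    refine ge_of_tendsto hEuler (eventually_atTop.mpr ⟨S, fun T hT => ?_⟩)
    rw [← Finset.prod_sdiff hT]
    have h1 : (1:ℝ) ≤ ∏ p ∈ T \ S, (1 - F (p:ℕ))⁻¹ := by
      calc (1:ℝ) = ∏ _p ∈ T \ S, (1:ℝ) := (Finset.prod_const_one).symm
        _ ≤ ∏ p ∈ T \ S, (1 - F (p:ℕ))⁻¹ := by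
            refine Finset.prod_le_prod (fun _ _ => zero_le_one) (fun p _ => ?_)
            rw [hFval]
            have h1 := hfac p
            have h2 := hfac0 p
            have h3 : (0:ℝ) < 1 - ((p:ℕ):ℝ) ^ (-s) := by linarith
            rw [one_le_inv_iff₀]
            exact ⟨h3, by linarith⟩
    have h2 : (0:ℝ) ≤ ∏ p ∈ S, (1 - F (p:ℕ))⁻¹ := by
      refine Finset.prod_nonneg fun p _ => ?_
      rw [hFval]
      have h1 := hfac p
      exact inv_nonneg.mpr (by linarith)
    nlinarith [h2, h1]
  have hprodpos : (0:ℝ) < ∏ p ∈ S, (1 - F (p:ℕ))⁻¹ := by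
    refine Finset.prod_pos fun p _ => ?_
    rw [hFval]
    have h1 := hfac p
    exact inv_pos.mpr (by linarith)
  have hzpos : (0:ℝ) < zetaR s := lt_of_lt_of_le one_pos (zetaR_ge_one hs)
  have hinv : (zetaR s)⁻¹ ≤ (∏ p ∈ S, (1 - F (p:ℕ))⁻¹)⁻¹ :=
    inv_anti₀ hprodpos hpartial
  rw [← Finset.prod_inv_distrib] at hinv
  simp only [inv_inv, hFval] at hinv
  exact hinv


-- a_p bounds
lemma ap_nonneg (k : ℕ) (p : Nat.Primes) :
    0 ≤ 2 * ((p:ℕ):ℝ) / ((((p:ℕ):ℝ) + 1) * ((p:ℕ):ℝ) ^ k) := by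
  have hp : (2:ℝ) ≤ ((p:ℕ):ℝ) := by exact_mod_cast p.prop.two_le
  positivity

lemma ap_le_rpow {k : ℕ} (hk : 2 ≤ k) (p : Nat.Primes) :
    2 * ((p:ℕ):ℝ) / ((((p:ℕ):ℝ) + 1) * ((p:ℕ):ℝ) ^ k) ≤ ((p:ℕ):ℝ) ^ (-((k:ℝ) - 1/2)) := by
  set x : ℝ := ((p:ℕ):ℝ) with hx'
  have hx : (2:ℝ) ≤ x := by rw [hx']; exact_mod_cast p.prop.two_le
  have hx0 : (0:ℝ) < x := by linarith
  have hsplit : x ^ (-((k:ℝ) - 1/2)) = x ^ ((1:ℝ)/2) * ((x:ℝ) ^ k)⁻¹ := by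
    rw [show -((k:ℝ) - 1/2) = (1:ℝ)/2 + (-(k:ℝ)) by ring, Real.rpow_add hx0,
      Real.rpow_neg hx0.le, Real.rpow_natCast]
  have hsqrt : x ^ ((1:ℝ)/2) = Real.sqrt x := (Real.sqrt_eq_rpow x).symm
  have hkey : 2 * x / (x + 1) ≤ Real.sqrt x := by
    set t := Real.sqrt x with ht'
    have ht : 1 ≤ t := by
      rw [ht', show (1:ℝ) = Real.sqrt 1 by simp]
      exact Real.sqrt_le_sqrt (by linarith)
    have ht2 : t ^ 2 = x := Real.sq_sqrt hx0.le
    rw [div_le_iff₀ (by linarith)]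
    nlinarith [sq_nonneg (t - 1), ht2]
  have hpk : (0:ℝ) < x ^ k := by positivity
  calc 2 * x / ((x + 1) * x ^ k) = (2 * x / (x + 1)) * (x ^ k)⁻¹ := by
        field_simp
    _ ≤ Real.sqrt x * (x ^ k)⁻¹ :=
        mul_le_mul_of_nonneg_right hkey (by positivity)
    _ = x ^ (-((k:ℝ) - 1/2)) := by rw [hsplit, hsqrt]

lemma rpow_ks_le {k : ℕ} (hk : 2 ≤ k) (p : Nat.Primes) :
    ((p:ℕ):ℝ) ^ (-((k:ℝ) - 1/2)) ≤ ((p:ℕ):ℝ) ^ (-(3:ℝ)/2) := by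
  have hx : (1:ℝ) ≤ ((p:ℕ):ℝ) := by
    have := p.prop.two_le
    exact_mod_cast le_trans (by norm_num) this
  refine Real.rpow_le_rpow_of_exponent_le hx ?_
  have : (2:ℝ) ≤ (k:ℝ) := by exact_mod_cast hk
  linarith

lemma rpow_p_le_half (p : Nat.Primes) : ((p:ℕ):ℝ) ^ (-(3:ℝ)/2) ≤ 1/2 := by
  have hx : (2:ℝ) ≤ ((p:ℕ):ℝ) := by exact_mod_cast p.prop.two_le
  calc ((p:ℕ):ℝ) ^ (-(3:ℝ)/2) ≤ (2:ℝ) ^ (-(3:ℝ)/2) :=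
        Real.rpow_le_rpow_of_nonpos two_pos hx (by norm_num)
    _ ≤ (2:ℝ) ^ (-(1:ℝ)) := Real.rpow_le_rpow_of_exponent_le one_le_two (by norm_num)
    _ = 1/2 := by
        rw [Real.rpow_neg (by norm_num : (0:ℝ) ≤ 2), Real.rpow_one]
        norm_num

lemma summable_p_rpow : Summable (fun p : Nat.Primes => ((p:ℕ):ℝ) ^ (-(3:ℝ)/2)) := by
  have h : Summable (fun n : ℕ => (n:ℝ) ^ (-(3:ℝ)/2)) :=
    Real.summable_nat_rpow.mpr (by norm_num)
  exact h.comp_injective Subtype.coe_injective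

lemma ap_le_half {k : ℕ} (hk : 2 ≤ k) (p : Nat.Primes) :
    2 * ((p:ℕ):ℝ) / ((((p:ℕ):ℝ) + 1) * ((p:ℕ):ℝ) ^ k) ≤ 1/2 :=
  le_trans (ap_le_rpow hk p) (le_trans (rpow_ks_le hk p) (rpow_p_le_half p))

lemma mult_one_sub {k : ℕ} (hk : 2 ≤ k) :
    Multipliable (fun p : Nat.Primes =>
      1 - 2 * ((p:ℕ):ℝ) / ((((p:ℕ):ℝ) + 1) * ((p:ℕ):ℝ) ^ k)) := by
  have hpos : ∀ p : Nat.Primes,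
      (0:ℝ) < 1 - 2 * ((p:ℕ):ℝ) / ((((p:ℕ):ℝ) + 1) * ((p:ℕ):ℝ) ^ k) := fun p => by
    have := ap_le_half hk p
    linarith
  have hlog : Summable (fun p : Nat.Primes =>
      Real.log (1 - 2 * ((p:ℕ):ℝ) / ((((p:ℕ):ℝ) + 1) * ((p:ℕ):ℝ) ^ k))) := by
    set a : Nat.Primes → ℝ :=
      fun p => 2 * ((p:ℕ):ℝ) / ((((p:ℕ):ℝ) + 1) * ((p:ℕ):ℝ) ^ k) with ha'
    have hsum : Summable (fun p : Nat.Primes => 2 * ((p:ℕ):ℝ) ^ (-(3:ℝ)/2)) :=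
      summable_p_rpow.mul_left 2
    have hneg : Summable (fun p : Nat.Primes => - Real.log (1 - a p)) := by
      refine Summable.of_nonneg_of_le (fun p => ?_) (fun p => ?_) hsum
      · rw [neg_nonneg]
        refine Real.log_nonpos ?_ ?_
        · linarith [hpos p]
        · linarith [ap_nonneg k p]
      · -- -log(1-a) ≤ 2a ≤ 2 p^{-3/2}
        have h1 : a p ≤ 1/2 := ap_le_half hk p
        have h0 : 0 ≤ a p := ap_nonneg k p
        have hp0 : 0 < 1 - a p := by linarith
        have hlog2 : Real.log ((1 - a p)⁻¹) ≤ (1 - a p)⁻¹ - 1 :=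
          Real.log_le_sub_one_of_pos (inv_pos.mpr hp0)
        rw [Real.log_inv] at hlog2
        have hinv : (1 - a p)⁻¹ ≤ 2 := by
          rw [inv_le_comm₀ (by linarith) (by norm_num)]
          linarith
        have h2 : - Real.log (1 - a p) ≤ 2 * a p := by
          have hfrac : (1 - a p)⁻¹ - 1 ≤ 2 * a p := by
            have : (1 - a p)⁻¹ - 1 = a p * (1 - a p)⁻¹ := by
              field_simp
              ring
            rw [this]
            calc a p * (1 - a p)⁻¹ ≤ a p * 2 := by
                  exact mul_le_mul_of_nonneg_left hinv h0
              _ = 2 * a p := mul_comm _ _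
          linarith
        refine le_trans h2 ?_
        have := le_trans (ap_le_rpow hk p) (rpow_ks_le hk p)
        linarith
    have := hneg.neg
    simpa using this
  exact Real.multipliable_of_summable_log hpos hlog

/-- `∏_p (1 - 2p/((p+1)p^k)) ≥ ζ(k-1/2)⁻¹`, and consequently
`c_k = (2k/(2k-1)) (ζ(2-1/k)/ζ(2)) (1 + O(2^{-k}))`. -/
theorem statement18 :
    (∀ k : ℕ, 2 ≤ k →
      (zetaR ((k : ℝ) - 1 / 2))⁻¹ ≤
        ∏' p : Nat.Primes,
          (1 - 2 * ((p : ℕ) : ℝ) / ((((p : ℕ) : ℝ) + 1) * ((p : ℕ) : ℝ) ^ k))) ∧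
    ∃ C : ℝ, 0 < C ∧ ∀ k : ℕ, 2 ≤ k → ∃ E : ℝ,
      ck k = (2 * (k : ℝ) / (2 * (k : ℝ) - 1)) * (zetaR (2 - 1 / (k : ℝ)) / zetaR 2) *
        (1 + E) ∧ |E| ≤ C * 2 ^ (-(k : ℝ)) := by
  have part1 : ∀ k : ℕ, 2 ≤ k →
      (zetaR ((k : ℝ) - 1 / 2))⁻¹ ≤
        ∏' p : Nat.Primes,
          (1 - 2 * ((p : ℕ) : ℝ) / ((((p : ℕ) : ℝ) + 1) * ((p : ℕ) : ℝ) ^ k)) := by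
    intro k hk
    have hk2 : (2:ℝ) ≤ (k:ℝ) := by exact_mod_cast hk
    have hs : 1 < (k:ℝ) - 1/2 := by linarith
    have hM := mult_one_sub hk
    refine ge_of_tendsto' hM.hasProd (fun S => ?_)
    calc (zetaR ((k:ℝ) - 1/2))⁻¹
        ≤ ∏ p ∈ S, (1 - ((p:ℕ):ℝ) ^ (-((k:ℝ) - 1/2))) := finprod_one_sub_ge hs S
      _ ≤ ∏ p ∈ S, (1 - 2 * ((p:ℕ):ℝ) / ((((p:ℕ):ℝ) + 1) * ((p:ℕ):ℝ) ^ k)) := by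
          refine Finset.prod_le_prod (fun p _ => ?_) (fun p _ => ?_)
          · have h1 : ((p:ℕ):ℝ) ^ (-((k:ℝ) - 1/2)) ≤ 1/2 :=
              le_trans (rpow_ks_le hk p) (rpow_p_le_half p)
            linarith
          · have := ap_le_rpow hk p
            linarith
  refine ⟨part1, 32, by norm_num, fun k hk => ?_⟩
  have hk2 : (2:ℝ) ≤ (k:ℝ) := by exact_mod_cast hk
  set t := (2:ℝ) ^ (-(k:ℝ)) with ht'
  have ht : 0 < t := Real.rpow_pos_of_pos two_pos _
  have ht4 : t ≤ 1/4 := by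
    have h1 : t ≤ (2:ℝ) ^ (-(2:ℝ)) :=
      Real.rpow_le_rpow_of_exponent_le one_le_two (by linarith)
    have h2 : (2:ℝ) ^ (-(2:ℝ)) = 1/4 := by
      rw [show (-(2:ℝ)) = ((-2 : ℤ) : ℝ) by norm_num, Real.rpow_intCast]
      norm_num
    rw [h2] at h1
    exact h1
  have h8 : (2:ℝ) ^ ((5:ℝ)/2 - (k:ℝ)) ≤ 8 * t := by
    have e1 : (2:ℝ) ^ ((5:ℝ)/2 - (k:ℝ)) = (2:ℝ) ^ ((5:ℝ)/2) * t := by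
      rw [ht', ← Real.rpow_add two_pos]
      ring_nf
    have e2 : (2:ℝ) ^ ((5:ℝ)/2) ≤ 8 := by
      have h3 : (2:ℝ) ^ ((5:ℝ)/2) ≤ (2:ℝ) ^ (((3:ℤ):ℝ)) :=
        Real.rpow_le_rpow_of_exponent_le one_le_two (by norm_num)
      rw [Real.rpow_intCast] at h3
      norm_num at h3
      linarith
    rw [e1]
    exact mul_le_mul_of_nonneg_right e2 ht.le
  have h8' : (2:ℝ) ^ ((5:ℝ)/2 - ((k:ℝ) - 1/2)) ≤ 8 * t := by
    have e0 : (5:ℝ)/2 - ((k:ℝ) - 1/2) = 3 + (-(k:ℝ)) := by ring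
    have e1 : (2:ℝ) ^ ((5:ℝ)/2 - ((k:ℝ) - 1/2)) = (2:ℝ) ^ ((3:ℝ)) * t := by
      rw [e0, Real.rpow_add two_pos, ht']
    have e2 : (2:ℝ) ^ ((3:ℝ)) = 8 := by
      rw [show (3:ℝ) = ((3 : ℤ) : ℝ) by norm_num, Real.rpow_intCast]
      norm_num
    rw [e1, e2]
  have hz1 : 1 ≤ zetaR (k:ℝ) := zetaR_ge_one (by linarith)
  have hzu : zetaR (k:ℝ) ≤ 1 + 8 * t :=
    le_trans (zetaR_le (by linarith)) (by linarith)
  have hzs1 : 1 ≤ zetaR ((k:ℝ) - 1/2) := zetaR_ge_one (by linarith)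
  have hzsu : zetaR ((k:ℝ) - 1/2) ≤ 1 + 8 * t :=
    le_trans (zetaR_le (by linarith)) (by linarith)
  set P := ∏' p : Nat.Primes,
    (1 - 2 * ((p : ℕ) : ℝ) / ((((p : ℕ) : ℝ) + 1) * ((p : ℕ) : ℝ) ^ k)) with hP'
  have hPl : (zetaR ((k:ℝ) - 1/2))⁻¹ ≤ P := by
    have := part1 k hk
    rw [← hP'] at this
    exact this
  have hP0 : 0 ≤ P := le_trans (by positivity) hPl
  have hP1 : P ≤ 1 := by
    refine le_of_tendsto' (mult_one_sub hk).hasProd (fun S => ?_)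
    refine Finset.prod_le_one (fun p _ => ?_) (fun p _ => ?_)
    · have := ap_le_half hk p
      linarith
    · have := ap_nonneg k p
      linarith
  have hPlow : 1 - 8 * t ≤ P := by
    have hzpos : 0 < zetaR ((k:ℝ) - 1/2) := by linarith
    have hmul : (2 - zetaR ((k:ℝ) - 1/2)) * zetaR ((k:ℝ) - 1/2) ≤ 1 := by nlinarith
    have hinv : 2 - zetaR ((k:ℝ) - 1/2) ≤ (zetaR ((k:ℝ) - 1/2))⁻¹ := by
      rw [inv_eq_one_div, le_div_iff₀ hzpos]
      exact hmul
    linarith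
  refine ⟨(zetaR (k:ℝ))^2 * P - 1, ?_, ?_⟩
  · simp only [ck, ← hP']
    ring
  · rw [abs_le]
    constructor
    · have hsq : 1 ≤ (zetaR (k:ℝ))^2 := by nlinarith
      have hmono : P ≤ (zetaR (k:ℝ))^2 * P := le_mul_of_one_le_left hP0 hsq
      linarith
    · have hsqu : (zetaR (k:ℝ))^2 ≤ (1 + 8*t)^2 := by nlinarith
      have hmono : (zetaR (k:ℝ))^2 * P ≤ (zetaR (k:ℝ))^2 :=
        mul_le_of_le_one_right (by positivity) hP1
      nlinarith
end

section
/- For every positive integer a and every real x ≥ 1, Σ_{c∈ℕ, c>x, (p∣c ⟹ p∣a)} 1/c ≤ x^{−24/35} · Π_{p prime, p∣a} (1 + Σ_{j=1}^∞ 2^{−11j/35}) ≤ τ(a)³ · x^{−24/35}, where the sum is over positive integers c > x all of whose prime factors divide a, and τ(a) denotes the number of positive divisors of a. -/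
open scoped Classical BigOperators Topology
open Filter Asymptotics

/-- The completely multiplicative function `n ↦ n^{-11/35}` (real). -/
noncomputable def fexp : ℕ →* ℝ where
  toFun n := (n : ℝ) ^ (-(11 : ℝ) / 35)
  map_one' := by simp
  map_mul' m n := by
    push_cast
    exact Real.mul_rpow (Nat.cast_nonneg m) (Nat.cast_nonneg n)

lemma fexp_apply (n : ℕ) : fexp n = (n : ℝ) ^ (-(11 : ℝ) / 35) := rfl

lemma r_le_seven_eighths : (2 : ℝ) ^ (-(11 : ℝ) / 35) ≤ 7 / 8 := by
  have h35 : ((2 : ℝ) ^ (-(11 : ℝ) / 35)) ^ (35 : ℕ) = 2 ^ (-(11 : ℝ)) := by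
    rw [← Real.rpow_natCast ((2 : ℝ) ^ (-(11 : ℝ) / 35)) 35, ← Real.rpow_mul (by norm_num)]
    norm_num
  refine le_of_pow_le_pow_left₀ (n := 35) (by norm_num) (by norm_num) ?_
  rw [h35, Real.rpow_neg (by norm_num), show ((11 : ℝ) = ((11 : ℕ) : ℝ)) by norm_num,
    Real.rpow_natCast]
  norm_num

lemma r_pos : (0 : ℝ) < (2 : ℝ) ^ (-(11 : ℝ) / 35) :=
  Real.rpow_pos_of_pos (by norm_num) _

lemma r_lt_one : (2 : ℝ) ^ (-(11 : ℝ) / 35) < 1 :=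
  lt_of_le_of_lt r_le_seven_eighths (by norm_num)

lemma one_add_S :
    1 + (∑' j : ℕ, (2 : ℝ) ^ (-(11 * ((j : ℝ) + 1)) / 35)) =
      (1 - (2 : ℝ) ^ (-(11 : ℝ) / 35))⁻¹ := by
  set r : ℝ := (2 : ℝ) ^ (-(11 : ℝ) / 35) with hr
  have hterm : ∀ j : ℕ, (2 : ℝ) ^ (-(11 * ((j : ℝ) + 1)) / 35) = r ^ j * r := by
    intro j
    rw [hr, show (-(11 * ((j : ℝ) + 1)) / 35) = (-(11 : ℝ) / 35) * ((j + 1 : ℕ) : ℝ) by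
        push_cast; ring,
      Real.rpow_mul (by norm_num), Real.rpow_natCast, pow_succ]
  have h1r : (0 : ℝ) < 1 - r := by linarith [r_lt_one]
  rw [tsum_congr hterm, tsum_mul_right, tsum_geometric_of_lt_one r_pos.le r_lt_one]
  clear_value r
  rw [← hr]
  field_simp
  ring

/-- tail estimate for the sum of `1/c` over integers `c > x`
all of whose prime factors divide `a`. -/
theorem statement19 (a : ℕ) (ha : 1 ≤ a) (x : ℝ) (hx : 1 ≤ x) :
    (∑' c : ℕ, if x < (c : ℝ) ∧ ∀ p : ℕ, p.Prime → p ∣ c → p ∣ a then 1 / (c : ℝ) else 0) ≤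
      x ^ (-(24 : ℝ) / 35) *
        ∏ p ∈ a.primeFactors, (1 + ∑' j : ℕ, (2 : ℝ) ^ (-(11 * ((j : ℝ) + 1)) / 35)) ∧
    x ^ (-(24 : ℝ) / 35) *
        ∏ p ∈ a.primeFactors, (1 + ∑' j : ℕ, (2 : ℝ) ^ (-(11 * ((j : ℝ) + 1)) / 35)) ≤
      ((a.divisors.card : ℝ)) ^ 3 * x ^ (-(24 : ℝ) / 35) := by
  have ha0 : a ≠ 0 := by omega
  have hxpos : (0 : ℝ) < x := by linarith
  set r : ℝ := (2 : ℝ) ^ (-(11 : ℝ) / 35) with hrdef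
  have hr1 : r < 1 := r_lt_one
  have h1r : (0 : ℝ) < 1 - r := by linarith
  have hS : 1 + (∑' j : ℕ, (2 : ℝ) ^ (-(11 * ((j : ℝ) + 1)) / 35)) = (1 - r)⁻¹ := one_add_S
  have hSpos : (0 : ℝ) < 1 + (∑' j : ℕ, (2 : ℝ) ^ (-(11 * ((j : ℝ) + 1)) / 35)) := by
    rw [hS]; positivity
  have hfle : ∀ p : ℕ, p.Prime → fexp p ≤ r := by
    intro p hp
    rw [fexp_apply, hrdef]
    exact Real.rpow_le_rpow_of_nonpos (by norm_num) (by exact_mod_cast hp.two_le) (by norm_num)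
  have hnorm : ∀ {p : ℕ}, p.Prime → ‖fexp p‖ < 1 := by
    intro p hp
    rw [Real.norm_of_nonneg (by rw [fexp_apply]; positivity)]
    exact lt_of_le_of_lt (hfle p hp) hr1
  obtain ⟨hsn, hhs⟩ :=
    EulerProduct.summable_and_hasSum_factoredNumbers_prod_filter_prime_geometric
      (f := fexp) hnorm a.primeFactors
  have hsum : Summable (fun m : Nat.factoredNumbers (a.primeFactors : Finset ℕ) => fexp m) :=
    hsn.of_norm
  have hfilter : a.primeFactors.filter Nat.Prime = a.primeFactors :=
    Finset.filter_true_of_mem fun p hp => Nat.prime_of_mem_primeFactors hp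
  have hprod : ∑' m : Nat.factoredNumbers (a.primeFactors : Finset ℕ), fexp m =
      ∏ p ∈ a.primeFactors, (1 - fexp p)⁻¹ := by
    rw [hhs.tsum_eq, hfilter]
  set g : ℕ → ℝ := Set.indicator (Nat.factoredNumbers (a.primeFactors : Finset ℕ)) fexp with hgdef
  have hg : Summable g := summable_subtype_iff_indicator.mp hsum
  have hgt : ∑' c, g c = ∏ p ∈ a.primeFactors, (1 - fexp p)⁻¹ := by
    rw [hgdef, ← tsum_subtype]; exact hprod
  have hgnn : ∀ c, 0 ≤ g c :=
    fun c => Set.indicator_nonneg (fun m _ => by rw [fexp_apply]; positivity) c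
  have key : ∀ c : ℕ,
      (if x < (c : ℝ) ∧ ∀ p : ℕ, p.Prime → p ∣ c → p ∣ a then 1 / (c : ℝ) else 0) ≤
        x ^ (-(24 : ℝ) / 35) * g c := by
    intro c
    by_cases h : x < (c : ℝ) ∧ ∀ p : ℕ, p.Prime → p ∣ c → p ∣ a
    · rw [if_pos h]
      obtain ⟨hxc, hsm⟩ := h
      have hcf : c ∈ Nat.factoredNumbers (a.primeFactors : Finset ℕ) :=
        Nat.mem_factoredNumbers'.mpr fun p hp hpc =>
          Nat.mem_primeFactors.mpr ⟨hp, hsm p hp hpc, ha0⟩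
      have hcpos : (0 : ℝ) < (c : ℝ) := hxpos.trans hxc
      rw [hgdef, Set.indicator_of_mem hcf, fexp_apply]
      have h1 : 1 / (c : ℝ) = (c : ℝ) ^ (-(24 : ℝ) / 35) * (c : ℝ) ^ (-(11 : ℝ) / 35) := by
        rw [← Real.rpow_add hcpos, show -(24 : ℝ) / 35 + -(11 : ℝ) / 35 = -1 by norm_num,
          Real.rpow_neg_one, one_div]
      rw [h1]
      exact mul_le_mul_of_nonneg_right
        (Real.rpow_le_rpow_of_nonpos hxpos hxc.le (by norm_num))
        (Real.rpow_nonneg hcpos.le _)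
    · rw [if_neg h]
      exact mul_nonneg (Real.rpow_nonneg hxpos.le _) (hgnn c)
  have hlsum : Summable (fun c : ℕ =>
      if x < (c : ℝ) ∧ ∀ p : ℕ, p.Prime → p ∣ c → p ∣ a then 1 / (c : ℝ) else 0) := by
    refine Summable.of_nonneg_of_le (fun c => ?_) key (hg.mul_left _)
    split <;> positivity
  have B1 : (∑' c : ℕ,
      if x < (c : ℝ) ∧ ∀ p : ℕ, p.Prime → p ∣ c → p ∣ a then 1 / (c : ℝ) else 0) ≤
      x ^ (-(24 : ℝ) / 35) * ∏ p ∈ a.primeFactors, (1 - fexp p)⁻¹ := by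
    calc (∑' c : ℕ, if x < (c : ℝ) ∧ ∀ p : ℕ, p.Prime → p ∣ c → p ∣ a then 1 / (c : ℝ) else 0)
        ≤ ∑' c : ℕ, x ^ (-(24 : ℝ) / 35) * g c := Summable.tsum_le_tsum key hlsum (hg.mul_left _)
      _ = x ^ (-(24 : ℝ) / 35) * ∑' c, g c := tsum_mul_left
      _ = _ := by rw [hgt]
  have hfacnn : ∀ p ∈ a.primeFactors, (0 : ℝ) ≤ (1 - fexp p)⁻¹ := by
    intro p hp
    have := hfle p (Nat.prime_of_mem_primeFactors hp)
    have : (0 : ℝ) < 1 - fexp p := by linarith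
    positivity
  have hfacle : ∀ p ∈ a.primeFactors, (1 - fexp p)⁻¹ ≤
      1 + (∑' j : ℕ, (2 : ℝ) ^ (-(11 * ((j : ℝ) + 1)) / 35)) := by
    intro p hp
    rw [hS, ← one_div, ← one_div]
    exact one_div_le_one_div_of_le h1r (by linarith [hfle p (Nat.prime_of_mem_primeFactors hp)])
  have prodle : ∏ p ∈ a.primeFactors, (1 - fexp p)⁻¹ ≤
      ∏ p ∈ a.primeFactors, (1 + (∑' j : ℕ, (2 : ℝ) ^ (-(11 * ((j : ℝ) + 1)) / 35))) :=
    Finset.prod_le_prod hfacnn hfacle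
  constructor
  · exact B1.trans (mul_le_mul_of_nonneg_left prodle (Real.rpow_nonneg hxpos.le _))
  · have hcard : (2 : ℕ) ^ a.primeFactors.card ≤ a.divisors.card := by
      rw [Nat.card_divisors ha0]
      calc (2 : ℕ) ^ a.primeFactors.card = ∏ _p ∈ a.primeFactors, 2 :=
            (Finset.prod_const 2).symm
        _ ≤ ∏ p ∈ a.primeFactors, (a.factorization p + 1) := by
            refine Finset.prod_le_prod' fun p hp => ?_
            have : a.factorization p ≠ 0 := by
              have hp' : p ∈ (a.factorization).support := by
                rwa [Nat.support_factorization]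
              exact Finsupp.mem_support_iff.mp hp'
            omega
    have h8 : 1 + (∑' j : ℕ, (2 : ℝ) ^ (-(11 * ((j : ℝ) + 1)) / 35)) ≤ 8 := by
      rw [hS]
      have hr78 : r ≤ 7 / 8 := r_le_seven_eighths
      calc (1 - r)⁻¹ ≤ ((1 : ℝ) / 8)⁻¹ := by
            rw [← one_div, ← one_div]
            exact one_div_le_one_div_of_le (by norm_num) (by linarith)
        _ = 8 := by norm_num
    have P2 : ∏ p ∈ a.primeFactors, (1 + (∑' j : ℕ, (2 : ℝ) ^ (-(11 * ((j : ℝ) + 1)) / 35))) ≤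
        ((a.divisors.card : ℝ)) ^ 3 := by
      calc ∏ p ∈ a.primeFactors, (1 + (∑' j : ℕ, (2 : ℝ) ^ (-(11 * ((j : ℝ) + 1)) / 35)))
          ≤ ∏ _p ∈ a.primeFactors, (8 : ℝ) :=
            Finset.prod_le_prod (fun p _ => hSpos.le) (fun p _ => h8)
        _ = (8 : ℝ) ^ a.primeFactors.card := Finset.prod_const 8
        _ = ((2 : ℝ) ^ a.primeFactors.card) ^ 3 := by
            rw [← pow_mul, mul_comm, pow_mul]; norm_num
        _ ≤ ((a.divisors.card : ℝ)) ^ 3 := by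
            refine pow_le_pow_left₀ (by positivity) ?_ 3
            exact_mod_cast hcard
    rw [mul_comm (((a.divisors.card : ℝ)) ^ 3)]
    exact mul_le_mul_of_nonneg_left P2 (Real.rpow_nonneg hxpos.le _)
end
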